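/- There exists a commutative (not necessarily unital, not necessarily associative) algebra A over ℚ that satisfies the weak right-commutativity identity ((ab)c)d = ((ab)d)c for all a, b, c, d ∈ A, but fails the minus-Tortken identity: there exist a, b, c, d ∈ A with (ab)(cd) − (ad)(cb) ≠ −((a(bc) − (ab)c)d) + ((a(dc) − (ad)c)b). Hence the minus-Tortken identity is not a consequence of commutativity and weak right-commutativity. -/

import Mathlib

/-- A (not necessarily associative or unital) commutative algebra over `ℚ`:
a `ℚ`-vector space equipped with a `ℚ`-bilinear commutative multiplication. -/
structure CommRatAlgebra where
  carrier : Type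
  [addCommGroup : AddCommGroup carrier]
  [module : Module ℚ carrier]
  mul : carrier →ₗ[ℚ] carrier →ₗ[ℚ] carrier
  mul_comm : ∀ x y : carrier, mul x y = mul y x

attribute [instance] CommRatAlgebra.addCommGroup CommRatAlgebra.module

private lemma vec6_0 (a b c d e f : ℚ) : ![a,b,c,d,e,f] (0 : Fin 6) = a := rfl
private lemma vec6_1 (a b c d e f : ℚ) : ![a,b,c,d,e,f] (1 : Fin 6) = b := rfl
private lemma vec6_2 (a b c d e f : ℚ) : ![a,b,c,d,e,f] (2 : Fin 6) = c := rfl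
private lemma vec6_3 (a b c d e f : ℚ) : ![a,b,c,d,e,f] (3 : Fin 6) = d := rfl
private lemma vec6_4 (a b c d e f : ℚ) : ![a,b,c,d,e,f] (4 : Fin 6) = e := rfl
private lemma vec6_5 (a b c d e f : ℚ) : ![a,b,c,d,e,f] (5 : Fin 6) = f := rfl

/-- The underlying bilinear multiplication of the counterexample algebra. -/
def exMulFun (x y : Fin 6 → ℚ) : Fin 6 → ℚ :=
  ![0, 0, x 0 * y 0, x 0 * y 1 + x 1 * y 0, x 1 * y 1, x 2 * y 4 + x 4 * y 2]

def exMul : (Fin 6 → ℚ) →ₗ[ℚ] (Fin 6 → ℚ) →ₗ[ℚ] (Fin 6 → ℚ) :=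
  LinearMap.mk₂ ℚ exMulFun
    (fun x x' y => by funext k; fin_cases k <;> simp [exMulFun, vec6_0, vec6_1, vec6_2, vec6_3, vec6_4, vec6_5] <;> ring)
    (fun r x y => by funext k; fin_cases k <;> simp [exMulFun, vec6_0, vec6_1, vec6_2, vec6_3, vec6_4, vec6_5] <;> ring)
    (fun x y y' => by funext k; fin_cases k <;> simp [exMulFun, vec6_0, vec6_1, vec6_2, vec6_3, vec6_4, vec6_5] <;> ring)
    (fun r x y => by funext k; fin_cases k <;> simp [exMulFun, vec6_0, vec6_1, vec6_2, vec6_3, vec6_4, vec6_5] <;> ring)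

def exAlg : CommRatAlgebra where
  carrier := Fin 6 → ℚ
  mul := exMul
  mul_comm := fun x y => by
    funext k; fin_cases k <;> simp [exMul, exMulFun, vec6_0, vec6_1, vec6_2, vec6_3, vec6_4, vec6_5] <;> ring

private lemma exAlg_mul_apply (x y : exAlg.carrier) (k : Fin 6) : exAlg.mul x y k = exMulFun x y k := rfl

/-- There is a commutative algebra over `ℚ` satisfying the weak right-commutativity
identity `((ab)c)d = ((ab)d)c` which fails the minus-Tortken identity. Hence
minus-Tortken is not a consequence of commutativity and weak right-commutativity. -/
theorem minus_tortken_not_consequence_of_weak_right_comm :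
    ∃ A : CommRatAlgebra,
      (∀ a b c d : A.carrier,
        A.mul (A.mul (A.mul a b) c) d = A.mul (A.mul (A.mul a b) d) c) ∧
      (∃ a b c d : A.carrier,
        A.mul (A.mul a b) (A.mul c d) - A.mul (A.mul a d) (A.mul c b)
          ≠ -A.mul (A.mul a (A.mul b c) - A.mul (A.mul a b) c) d
            + A.mul (A.mul a (A.mul d c) - A.mul (A.mul a d) c) b) := by
  refine ⟨exAlg, ?_, ?_⟩
  · intro a b c d
    funext k; fin_cases k <;> simp [exAlg_mul_apply, exMulFun, vec6_0, vec6_1, vec6_2, vec6_3, vec6_4, vec6_5]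
  · refine ⟨![1,0,0,0,0,0], ![1,0,0,0,0,0], ![0,1,0,0,0,0], ![0,1,0,0,0,0], fun h => ?_⟩
    have this : (exMulFun (exMulFun (![1,0,0,0,0,0] : Fin 6 → ℚ) (![1,0,0,0,0,0] : Fin 6 → ℚ)) (exMulFun (![0,1,0,0,0,0] : Fin 6 → ℚ) (![0,1,0,0,0,0] : Fin 6 → ℚ)) - exMulFun (exMulFun (![1,0,0,0,0,0] : Fin 6 → ℚ) (![0,1,0,0,0,0] : Fin 6 → ℚ)) (exMulFun (![0,1,0,0,0,0] : Fin 6 → ℚ) (![1,0,0,0,0,0] : Fin 6 → ℚ))) 5 = (-exMulFun (exMulFun (![1,0,0,0,0,0] : Fin 6 → ℚ) (exMulFun (![1,0,0,0,0,0] : Fin 6 → ℚ) (![0,1,0,0,0,0] : Fin 6 → ℚ)) - exMulFun (exMulFun (![1,0,0,0,0,0] : Fin 6 → ℚ) (![1,0,0,0,0,0] : Fin 6 → ℚ)) (![0,1,0,0,0,0] : Fin 6 → ℚ)) (![0,1,0,0,0,0] : Fin 6 → ℚ) + exMulFun (exMulFun (![1,0,0,0,0,0] : Fin 6 → ℚ)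 (exMulFun (![0,1,0,0,0,0] : Fin 6 → ℚ) (![0,1,0,0,0,0] : Fin 6 → ℚ)) - exMulFun (exMulFun (![1,0,0,0,0,0] : Fin 6 → ℚ) (![0,1,0,0,0,0] : Fin 6 → ℚ)) (![0,1,0,0,0,0] : Fin 6 → ℚ)) (![1,0,0,0,0,0] : Fin 6 → ℚ)) 5 := congrFun h 5
    simp [exMulFun, vec6_0, vec6_1, vec6_2, vec6_3, vec6_4, vec6_5] at this
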